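/- Let (x_k), (y_k) be generated by the Chambolle–Pock iteration x_{k+1} = prox_{τf}(x_k − τ L* y_k), y_{k+1} = prox_{σ g*}(y_k + σ L(x_{k+1} + θ(x_{k+1} − x_k))) with τ, σ > 0, let (x⋆, y⋆) be a KKT point (−L*y⋆ ∈ ∂f(x⋆), Lx⋆ ∈ ∂g*(y⋆)), and define F_k = f(x_{k+1}) − f(x⋆) + ⟨L*y⋆, x_{k+1} − x⋆⟩. Then for every nonnegative integer k, F_{k+1} ≤ (1/τ)⟨x_{k+1} − x_{k+2}, x_{k+2} − x⋆⟩ + ⟨y⋆ − y_{k+1}, Lx_{k+2} − Lx⋆⟩. -/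

import Mathlib

open scoped RealInnerProductSpace
open Filter Topology

noncomputable section

/-- The convex subdifferential of an extended-real-valued function:
`∂f(x) = { u : ∀ z, f z ≥ f x + ⟪u, z - x⟫ }`. -/
def ESubdiff {E : Type*} [NormedAddCommGroup E] [InnerProductSpace ℝ E]
    (f : E → EReal) (x : E) : Set E :=
  {u | ∀ z : E, f x + ((⟪u, z - x⟫ : ℝ) : EReal) ≤ f z}

/-- Properness of an extended-real-valued function: it never takes the value `⊥`
and is not identically `⊤`. -/
def EProper {E : Type*} (f : E → EReal) : Prop :=
  (∃ x, f x ≠ ⊤) ∧ ∀ x, f x ≠ ⊥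

/-- Convexity of an extended-real-valued function. -/
def EConvex {E : Type*} [NormedAddCommGroup E] [NormedSpace ℝ E] (f : E → EReal) : Prop :=
  ∀ x y : E, ∀ a b : ℝ, 0 ≤ a → 0 ≤ b → a + b = 1 →
    f (a • x + b • y) ≤ (a : EReal) * f x + (b : EReal) * f y

/-- The convex (Fenchel) conjugate `g*(y) = sup_x (⟪x, y⟫ - g x)`. -/
def EConj {E : Type*} [NormedAddCommGroup E] [InnerProductSpace ℝ E]
    (g : E → EReal) (y : E) : EReal :=
  ⨆ x : E, ((⟪x, y⟫ : ℝ) : EReal) - g x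

/-- `IsProx τ f x p` states that `p = prox_{τ f}(x)`, i.e. `p` minimizes
`fun z => f z + (1/(2τ)) ‖z - x‖²`. -/
def IsProx {E : Type*} [NormedAddCommGroup E] [InnerProductSpace ℝ E]
    (τ : ℝ) (f : E → EReal) (x p : E) : Prop :=
  ∀ z : E, f p + ((1 / (2 * τ) * ‖p - x‖ ^ 2 : ℝ) : EReal)
      ≤ f z + ((1 / (2 * τ) * ‖z - x‖ ^ 2 : ℝ) : EReal)

/-- The Lagrangian `𝓛(x, y) = f x + ⟪y, L x⟫ - g*(y)` of the saddle-point problem. -/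
def Lagr {E F : Type*} [NormedAddCommGroup E] [InnerProductSpace ℝ E]
    [NormedAddCommGroup F] [InnerProductSpace ℝ F]
    (f : E → EReal) (gs : F → EReal) (L : E →L[ℝ] F) (x : E) (y : F) : EReal :=
  f x + ((⟪y, L x⟫ : ℝ) : EReal) - gs y

theorem Fk_succ_bound
    {𝓗 𝓖 : Type*}
    [NormedAddCommGroup 𝓗] [InnerProductSpace ℝ 𝓗] [CompleteSpace 𝓗]
    [NormedAddCommGroup 𝓖] [InnerProductSpace ℝ 𝓖] [CompleteSpace 𝓖]
    (f : 𝓗 → EReal) (g : 𝓖 → EReal) (gs : 𝓖 → EReal)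
    (hf₁ : EProper f) (hf₂ : EConvex f) (hf₃ : LowerSemicontinuous f)
    (hg₁ : EProper g) (hg₂ : EConvex g) (hg₃ : LowerSemicontinuous g)
    (hgs : gs = EConj g)
    (L : 𝓗 →L[ℝ] 𝓖) (hL : L ≠ 0)
    (τ σ θ : ℝ) (hτ : 0 < τ) (hσ : 0 < σ)
    (θ : ℝ)
    (xstar : 𝓗) (ystar : 𝓖)
    (hkkt₁ : -((ContinuousLinearMap.adjoint L) ystar) ∈ ESubdiff f xstar)
    (hkkt₂ : L xstar ∈ ESubdiff gs ystar)
    (x : ℕ → 𝓗) (y : ℕ → 𝓖)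
    (hx : ∀ k : ℕ, IsProx τ f (x k - τ • (ContinuousLinearMap.adjoint L) (y k)) (x (k + 1)))
    (hy : ∀ k : ℕ,
      IsProx σ gs (y k + σ • L (x (k + 1) + θ • (x (k + 1) - x k))) (y (k + 1)))
    (F : ℕ → EReal)
    (hF : ∀ k : ℕ, F k = f (x (k + 1)) - f xstar
      + ((⟪(ContinuousLinearMap.adjoint L) ystar, x (k + 1) - xstar⟫ : ℝ) : EReal))
    :
    ∀ k : ℕ, F (k + 1) ≤ ((1 / τ * ⟪x (k + 1) - x (k + 2), x (k + 2) - xstar⟫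
      + ⟪ystar - y (k + 1), L (x (k + 2)) - L xstar⟫ : ℝ) : EReal) := by
  intro k
  rw [hF (k + 1)]
  have hidx : k + 1 + 1 = k + 2 := rfl
  rw [hidx]
  by_cases htop : f xstar = ⊤
  · rw [htop]
    have hb : f (x (k + 2)) - (⊤ : EReal) = ⊥ := EReal.sub_top _
    rw [hb, EReal.bot_add]
    exact bot_le
  · have hbot := hf₁.2
    set p := x (k + 2) with hp_def
    set w := x (k + 1) - τ • (ContinuousLinearMap.adjoint L) (y (k + 1)) with hw_def
    have hprox : IsProx τ f w p := hx (k + 1)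
    have hτ' : τ ≠ 0 := ne_of_gt hτ
    have hfp_top : f p ≠ ⊤ := by
      intro h
      have h1 := hprox xstar
      rw [h] at h1
      rw [EReal.top_add_of_ne_bot (EReal.coe_ne_bot _)] at h1
      have h2 : f xstar + ((1 / (2 * τ) * ‖xstar - w‖ ^ 2 : ℝ) : EReal) < ⊤ :=
        EReal.add_lt_top htop (EReal.coe_ne_top _)
      exact h2.ne (top_le_iff.mp h1)
    set A := (f p).toReal with hA_def
    set B := (f xstar).toReal with hB_def
    have hA : f p = (A : EReal) := (EReal.coe_toReal hfp_top (hbot p)).symm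
    have hB : f xstar = (B : EReal) := (EReal.coe_toReal htop (hbot xstar)).symm
    set ip : ℝ := ⟪p - w, xstar - p⟫ with hip_def
    set ns : ℝ := ‖xstar - p‖ ^ 2 with hns_def
    have hns_nonneg : 0 ≤ ns := by positivity
    have key : ∀ t : ℝ, 0 < t → t ≤ 1 →
        A ≤ B + 1 / τ * ip + t * (1 / (2 * τ)) * ns := by
      intro t ht ht1
      have hconv := hf₂ p xstar (1 - t) t (by linarith) ht.le (by ring)
      rw [hA, hB] at hconv
      have hconv' : f ((1 - t) • p + t • xstar) ≤ (((1 - t) * A + t * B : ℝ) : EReal) := by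
        refine hconv.trans_eq ?_
        rw [← EReal.coe_mul, ← EReal.coe_mul, ← EReal.coe_add]
      have hpr := hprox ((1 - t) • p + t • xstar)
      rw [hA] at hpr
      have hpr2 := hpr.trans (add_le_add hconv' le_rfl)
      have hreal : A + 1 / (2 * τ) * ‖p - w‖ ^ 2
          ≤ (1 - t) * A + t * B + 1 / (2 * τ) * ‖(1 - t) • p + t • xstar - w‖ ^ 2 := by
        exact_mod_cast hpr2
      have hexp : (1 - t) • p + t • xstar - w = (p - w) + t • (xstar - p) := by
        module
      rw [hexp] at hreal
      have hnorm : ‖(p - w) + t • (xstar - p)‖ ^ 2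
          = ‖p - w‖ ^ 2 + 2 * (t * ip) + t ^ 2 * ns := by
        rw [hip_def, hns_def, norm_add_sq_real, real_inner_smul_right, norm_smul]
        rw [mul_pow, Real.norm_eq_abs, sq_abs]
      rw [hnorm] at hreal
      have h2 : t * A ≤ t * (B + 1 / τ * ip + t * (1 / (2 * τ)) * ns) := by
        ring_nf at hreal ⊢
        linarith
      exact le_of_mul_le_mul_left h2 ht
    have hAB : A ≤ B + 1 / τ * ip := by
      apply le_of_forall_pos_le_add
      intro ε hε
      set M : ℝ := 1 / (2 * τ) * ns with hM_def
      have hM_nonneg : 0 ≤ M := by positivity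
      set t : ℝ := min 1 (ε / (M + 1)) with ht_def
      have ht_pos : 0 < t := lt_min one_pos (by positivity)
      have ht_le : t ≤ 1 := min_le_left _ _
      have htM : t * M ≤ ε := by
        have h1 : t ≤ ε / (M + 1) := min_le_right _ _
        have h2 : t * (M + 1) ≤ ε := by
          rw [← le_div_iff₀ (by positivity)]; exact h1
        nlinarith
      have hk := key t ht_pos ht_le
      have : t * (1 / (2 * τ)) * ns = t * M := by rw [hM_def]; ring
      linarith [hk, this.ge]
    rw [hA, hB, ← EReal.coe_sub, ← EReal.coe_add, EReal.coe_le_coe_iff]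
    have e1 : p - w = (p - x (k + 1)) + τ • (ContinuousLinearMap.adjoint L) (y (k + 1)) := by
      rw [hw_def]; module
    have hid : 1 / τ * ip + ⟪(ContinuousLinearMap.adjoint L) ystar, p - xstar⟫
        = 1 / τ * ⟪x (k + 1) - p, p - xstar⟫ + ⟪ystar - y (k + 1), L p - L xstar⟫ := by
      rw [hip_def, e1]
      simp only [inner_add_left, real_inner_smul_left, ContinuousLinearMap.adjoint_inner_left,
        map_sub, inner_sub_left, inner_sub_right]
      field_simp
      ring
    linarith [hid]
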